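/- Let H = -(l₀/l)²(ℏ²/2m) d²/dx² with Dirichlet conditions on I = [-l₀/2, l₀/2], and K = -(l̇/l)(x∘p) - (l₀/l)ḋ p where x∘p = (xp+px)/2. Then K is relatively bounded with respect to H with relative bound 0: for every ε > 0 there is C_ε ≥ 0 such that ‖Kψ‖ ≤ ε‖Hψ‖ + C_ε‖ψ‖ for all ψ in the domain of H. -/

import Mathlib

open MeasureTheory intervalIntegral

lemma sqrt_mul_le_half (u v t : ℝ) (hu : 0 ≤ u) (hv : 0 ≤ v) (ht : 0 < t) :
    Real.sqrt (u * v) ≤ (u / t + t * v) / 2 := by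
  have h1 : u * v ≤ ((u / t + t * v) / 2) ^ 2 := by
    have h : u * v = (u / t) * (t * v) := by field_simp
    rw [h]; nlinarith [sq_nonneg (u / t - t * v)]
  calc Real.sqrt (u * v) ≤ Real.sqrt (((u / t + t * v) / 2) ^ 2) := Real.sqrt_le_sqrt h1
    _ = (u / t + t * v) / 2 := Real.sqrt_sq (by positivity)

lemma cs_interval {a b : ℝ} (hab : a ≤ b) {f g : ℝ → ℝ}
    (hf2 : IntervalIntegrable (fun x => f x ^ 2) volume a b)
    (hg2 : IntervalIntegrable (fun x => g x ^ 2) volume a b)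
    (hfg : IntervalIntegrable (fun x => f x * g x) volume a b) :
    (∫ x in a..b, f x * g x) ≤
      Real.sqrt (∫ x in a..b, f x ^ 2) * Real.sqrt (∫ x in a..b, g x ^ 2) := by
  set F := ∫ x in a..b, f x ^ 2 with hF
  set G := ∫ x in a..b, g x ^ 2 with hG
  set P := ∫ x in a..b, f x * g x with hP
  have hF0 : 0 ≤ F := intervalIntegral.integral_nonneg hab fun x _ => sq_nonneg _
  have hG0 : 0 ≤ G := intervalIntegral.integral_nonneg hab fun x _ => sq_nonneg _
  have key : ∀ t : ℝ, 0 ≤ G * (t * t) + (-2 * P) * t + F := by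
    intro t
    have h0 : 0 ≤ ∫ x in a..b, (f x - t * g x) ^ 2 :=
      intervalIntegral.integral_nonneg hab fun x _ => sq_nonneg _
    have e : (fun x => (f x - t * g x) ^ 2) =
        fun x => (f x ^ 2 + t ^ 2 * g x ^ 2) - (2 * t) * (f x * g x) := by
      funext x; ring
    rw [e, intervalIntegral.integral_sub (hf2.add (hg2.const_mul (t ^ 2)))
        (hfg.const_mul (2 * t)), intervalIntegral.integral_add hf2 (hg2.const_mul _),
        intervalIntegral.integral_const_mul, intervalIntegral.integral_const_mul] at h0
    nlinarith [h0]
  have hd := discrim_le_zero key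
  rw [discrim] at hd
  have hP2 : P ^ 2 ≤ F * G := by nlinarith
  calc P ≤ |P| := le_abs_self P
    _ = Real.sqrt (P ^ 2) := (Real.sqrt_sq_eq_abs P).symm
    _ ≤ Real.sqrt (F * G) := Real.sqrt_le_sqrt hP2
    _ = Real.sqrt F * Real.sqrt G := Real.sqrt_mul hF0 G

open MeasureTheory intervalIntegral

/-- The `L²` norm of a function on the interval `[-l₀/2, l₀/2]`. -/
noncomputable def l2NormOn (l₀ : ℝ) (f : ℝ → ℂ) : ℝ :=
  Real.sqrt (∫ x in (-(l₀ / 2))..(l₀ / 2), ‖f x‖ ^ 2)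

/-- The geometric term `K = -(l̇/l)(x∘p) - (l₀/l)ḋ p`, with `x∘p = xp - iℏ/2`,
is relatively bounded with respect to the Dirichlet Hamiltonian
`H = -(l₀/l)²(ℏ²/2m) d²/dx²` on `I = [-l₀/2, l₀/2]` with relative bound `0`. -/
theorem geometric_term_relatively_bounded
    (l₀ l ldot ddot m ℏ : ℝ) (hl₀ : 0 < l₀) (hl : 0 < l) (hm : 0 < m) (hℏ : 0 < ℏ) :
    ∀ ε > (0 : ℝ), ∃ C ≥ (0 : ℝ),
      ∀ ψ ψ' ψ'' : ℝ → ℂ,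
        (∀ x ∈ Set.Icc (-(l₀ / 2)) (l₀ / 2),
            HasDerivWithinAt ψ (ψ' x) (Set.Icc (-(l₀ / 2)) (l₀ / 2)) x) →
        (∀ x ∈ Set.Icc (-(l₀ / 2)) (l₀ / 2),
            HasDerivWithinAt ψ' (ψ'' x) (Set.Icc (-(l₀ / 2)) (l₀ / 2)) x) →
        IntervalIntegrable (fun x => ‖ψ'' x‖ ^ 2) volume (-(l₀ / 2)) (l₀ / 2) →
        ψ (-(l₀ / 2)) = 0 → ψ (l₀ / 2) = 0 →
        l2NormOn l₀ (fun x =>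
            -(ldot / l : ℂ) * ((x : ℂ) * (-Complex.I * ℏ * ψ' x)
              - Complex.I * (ℏ / 2) * ψ x)
            - ((l₀ / l) * ddot : ℂ) * (-Complex.I * ℏ * ψ' x))
          ≤ ε * l2NormOn l₀ (fun x => -((l₀ / l) ^ 2 * (ℏ ^ 2 / (2 * m)) : ℂ) * ψ'' x)
            + C * l2NormOn l₀ ψ := by
  intro ε hε
  set c : ℝ := (l₀ / l) ^ 2 * (ℏ ^ 2 / (2 * m)) with hc
  clear_value c
  have hc0 : 0 < c := by rw [hc]; positivity
  set A : ℝ := ℏ * (|ldot / l| * (l₀ / 2) + |(l₀ / l) * ddot|) with hA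
  clear_value A
  have hA0 : 0 ≤ A := by rw [hA]; positivity
  set B : ℝ := ℏ * |ldot / (2 * l)| with hB
  clear_value B
  have hB0 : 0 ≤ B := by rw [hB]; positivity
  set t : ℝ := 2 * ε * c / (A + 1) with htdef
  clear_value t
  have ht : 0 < t := by
    rw [htdef]
    exact div_pos (by nlinarith) (by linarith)
  have hA1 : A + 1 ≠ 0 := by linarith
  have hεc : ε * c ≠ 0 := ne_of_gt (mul_pos hε hc0)
  refine ⟨(A + 1) ^ 2 / (4 * (ε * c)) + B,
    add_nonneg (div_nonneg (sq_nonneg _) (by nlinarith)) hB0, ?_⟩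
  intro ψ ψ' ψ'' hψ hψ' hR2 h0a h0b
  simp only [l2NormOn]
  set a : ℝ := -(l₀ / 2) with ha
  set b : ℝ := l₀ / 2 with hb
  clear_value a b
  have hab : a ≤ b := by rw [ha, hb]; linarith
  -- continuity
  have hcψ : ContinuousOn ψ (Set.Icc a b) := fun x hx => (hψ x hx).continuousWithinAt
  have hcψ' : ContinuousOn ψ' (Set.Icc a b) := fun x hx => (hψ' x hx).continuousWithinAt
  -- ψ'' agrees with deriv ψ' on the open interval
  have hEq : ∀ x ∈ Set.Ioo a b, ψ'' x = deriv ψ' x := by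
    intro x hx
    exact (((hψ' x (Set.Ioo_subset_Icc_self hx)).hasDerivAt
      (Icc_mem_nhds hx.1 hx.2)).deriv).symm
  have hres : volume.restrict (Set.Ioc a b) = volume.restrict (Set.Ioo a b) :=
    (Measure.restrict_congr_set Ioo_ae_eq_Ioc).symm
  have haeIoo : ∀ᵐ x ∂volume.restrict (Set.Ioc a b), x ∈ Set.Ioo a b := by
    rw [hres]; exact ae_restrict_mem measurableSet_Ioo
  have hae : ψ'' =ᵐ[volume.restrict (Set.Ioc a b)] deriv ψ' := by
    filter_upwards [haeIoo] with x hx using hEq x hx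
  have hmeas : AEStronglyMeasurable ψ'' (volume.restrict (Set.Ioc a b)) :=
    ((measurable_deriv ψ').aestronglyMeasurable).congr hae.symm
  -- integrability of ψ''
  have hR2' : IntegrableOn (fun x => ‖ψ'' x‖ ^ 2) (Set.Ioc a b) volume :=
    (intervalIntegrable_iff_integrableOn_Ioc_of_le hab).mp hR2
  have hψ''Int : IntervalIntegrable ψ'' volume a b := by
    rw [intervalIntegrable_iff_integrableOn_Ioc_of_le hab]
    refine Integrable.mono ((integrable_const (1 : ℝ)).add hR2') hmeas ?_
    filter_upwards with x
    have h1 : ‖ψ'' x‖ ≤ 1 + ‖ψ'' x‖ ^ 2 := by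
      nlinarith [norm_nonneg (ψ'' x), sq_nonneg (‖ψ'' x‖ - 1)]
    calc ‖ψ'' x‖ = ‖ψ'' x‖ := rfl
      _ ≤ 1 + ‖ψ'' x‖ ^ 2 := h1
      _ ≤ ‖1 + ‖ψ'' x‖ ^ 2‖ := le_abs_self _
  -- bound on ψ
  obtain ⟨M, hM⟩ := isCompact_Icc.exists_bound_of_continuousOn hcψ
  have hM0 : 0 ≤ M := le_trans (norm_nonneg _) (hM a (Set.left_mem_Icc.mpr hab))
  -- integrability of ψ * conj ψ''
  have hprodI : IntervalIntegrable (fun x => ψ x * (starRingEnd ℂ) (ψ'' x)) volume a b := by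
    rw [intervalIntegrable_iff_integrableOn_Ioc_of_le hab]
    have hmψ : AEStronglyMeasurable ψ (volume.restrict (Set.Ioc a b)) :=
      (hcψ.mono Set.Ioc_subset_Icc_self).aestronglyMeasurable measurableSet_Ioc
    have hg : IntegrableOn (fun x => M * ‖ψ'' x‖) (Set.Ioc a b) volume :=
      (((intervalIntegrable_iff_integrableOn_Ioc_of_le hab).mp hψ''Int).norm).const_mul M
    refine Integrable.mono hg (hmψ.mul (Complex.continuous_conj.comp_aestronglyMeasurable hmeas)) ?_
    rw [ae_restrict_iff' measurableSet_Ioc]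
    filter_upwards with x hx
    have h1 : ‖ψ x‖ ≤ M := hM x (Set.Ioc_subset_Icc_self hx)
    calc ‖ψ x * (starRingEnd ℂ) (ψ'' x)‖ = ‖ψ x‖ * ‖ψ'' x‖ := by
          rw [norm_mul, RCLike.norm_conj]
      _ ≤ M * ‖ψ'' x‖ := by gcongr
      _ ≤ ‖M * ‖ψ'' x‖‖ := le_abs_self _
  -- integration by parts
  have hI1 : IntervalIntegrable (fun x => ψ' x * (starRingEnd ℂ) (ψ' x)) volume a b := by
    apply ContinuousOn.intervalIntegrable
    rw [Set.uIcc_of_le hab]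
    exact hcψ'.mul (RCLike.continuous_conj.comp_continuousOn hcψ')
  have hibp : (∫ x in a..b, (ψ' x * (starRingEnd ℂ) (ψ' x) + ψ x * (starRingEnd ℂ) (ψ'' x))) = 0 := by
    have hcont : ContinuousOn (fun x => ψ x * (starRingEnd ℂ) (ψ' x)) (Set.Icc a b) :=
      hcψ.mul (RCLike.continuous_conj.comp_continuousOn hcψ')
    have hderiv : ∀ x ∈ Set.Ioo a b, HasDerivAt (fun y => ψ y * (starRingEnd ℂ) (ψ' y))
        (ψ' x * (starRingEnd ℂ) (ψ' x) + ψ x * (starRingEnd ℂ) (ψ'' x)) x := by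
      intro x hx
      have h1 : HasDerivAt ψ (ψ' x) x :=
        (hψ x (Set.Ioo_subset_Icc_self hx)).hasDerivAt (Icc_mem_nhds hx.1 hx.2)
      have h2 : HasDerivAt ψ' (ψ'' x) x :=
        (hψ' x (Set.Ioo_subset_Icc_self hx)).hasDerivAt (Icc_mem_nhds hx.1 hx.2)
      have h3 : HasDerivAt (fun y => (starRingEnd ℂ) (ψ' y)) ((starRingEnd ℂ) (ψ'' x)) x := h2.star
      exact h1.mul h3
    rw [intervalIntegral.integral_eq_sub_of_hasDerivAt_of_le hab hcont hderiv (hI1.add hprodI),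
      h0a, h0b]
    simp
  -- key: ∫|ψ'|² ≤ sqrt(∫|ψ|²) * sqrt(∫|ψ''|²)
  set Q := ∫ x in a..b, ‖ψ x‖ ^ 2 with hQ
  set Q' := ∫ x in a..b, ‖ψ' x‖ ^ 2 with hQ'
  set R := ∫ x in a..b, ‖ψ'' x‖ ^ 2 with hRdef
  clear_value Q Q' R
  have hIQ : IntervalIntegrable (fun x => ‖ψ x‖ ^ 2) volume a b := by
    apply ContinuousOn.intervalIntegrable
    rw [Set.uIcc_of_le hab]
    exact (continuous_norm.comp_continuousOn hcψ).pow 2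
  have hIQ' : IntervalIntegrable (fun x => ‖ψ' x‖ ^ 2) volume a b := by
    apply ContinuousOn.intervalIntegrable
    rw [Set.uIcc_of_le hab]
    exact (continuous_norm.comp_continuousOn hcψ').pow 2
  have hQ0 : 0 ≤ Q := by
    rw [hQ]; exact intervalIntegral.integral_nonneg hab fun x _ => sq_nonneg _
  have hQ'0 : 0 ≤ Q' := by
    rw [hQ']; exact intervalIntegral.integral_nonneg hab fun x _ => sq_nonneg _
  have hR0 : 0 ≤ R := by
    rw [hRdef]; exact intervalIntegral.integral_nonneg hab fun x _ => sq_nonneg _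
  have e1 : (∫ x in a..b, ψ' x * (starRingEnd ℂ) (ψ' x)) = ((Q' : ℝ) : ℂ) := by
    rw [hQ', ← intervalIntegral.integral_ofReal]
    congr 1
    funext x
    rw [Complex.mul_conj]
    norm_cast
    rw [Complex.sq_norm]
  have hsplit : ((Q' : ℝ) : ℂ) = - ∫ x in a..b, ψ x * (starRingEnd ℂ) (ψ'' x) := by
    rw [← e1]
    have := intervalIntegral.integral_add hI1 hprodI
    rw [this] at hibp
    linear_combination hibp
  have hprodAbsI : IntervalIntegrable (fun x => ‖ψ x‖ * ‖ψ'' x‖) volume a b := by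
    have h := hprodI.norm
    have e : (fun x => ‖ψ x * (starRingEnd ℂ) (ψ'' x)‖) =
        fun x => ‖ψ x‖ * ‖ψ'' x‖ := by
      funext x
      rw [norm_mul, RCLike.norm_conj]
    rwa [e] at h
  have key : Q' ≤ Real.sqrt Q * Real.sqrt R := by
    have h1 : Q' = ‖((Q' : ℝ) : ℂ)‖ := by
      rw [Complex.norm_real, Real.norm_eq_abs, abs_of_nonneg hQ'0]
    have h2 : ‖((Q' : ℝ) : ℂ)‖ ≤ ∫ x in a..b, ‖ψ x‖ * ‖ψ'' x‖ := by
      rw [hsplit, norm_neg]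
      calc ‖∫ x in a..b, ψ x * (starRingEnd ℂ) (ψ'' x)‖
          = ‖∫ x in a..b, ψ x * (starRingEnd ℂ) (ψ'' x)‖ := rfl
        _ ≤ ∫ x in a..b, ‖ψ x * (starRingEnd ℂ) (ψ'' x)‖ :=
            intervalIntegral.norm_integral_le_integral_norm hab
        _ = ∫ x in a..b, ‖ψ x‖ * ‖ψ'' x‖ := by
            congr 1; funext x; rw [norm_mul, RCLike.norm_conj]
    have h3 := cs_interval hab hIQ hR2 hprodAbsI
    calc Q' = ‖((Q' : ℝ) : ℂ)‖ := h1
      _ ≤ ∫ x in a..b, ‖ψ x‖ * ‖ψ'' x‖ := h2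
      _ ≤ Real.sqrt Q * Real.sqrt R := by rw [hQ, hRdef]; exact h3
  -- pointwise bound on K
  set Kf : ℝ → ℂ := fun x =>
      -(ldot / l : ℂ) * ((x : ℂ) * (-Complex.I * ℏ * ψ' x) - Complex.I * (ℏ / 2) * ψ x)
        - ((l₀ / l) * ddot : ℂ) * (-Complex.I * ℏ * ψ' x) with hKf
  clear_value Kf
  have hKpt : ∀ x ∈ Set.Icc a b,
      ‖Kf x‖ ≤ A * ‖ψ' x‖ + B * ‖ψ x‖ := by
    intro x hx
    have hxa : |x| ≤ l₀ / 2 := by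
      rw [abs_le]
      constructor
      · have := hx.1; rw [ha] at this; linarith
      · have := hx.2; rw [hb] at this; linarith
    have e : Kf x = Complex.I * ℏ * (((ldot / l * x + l₀ / l * ddot : ℝ) : ℂ) * ψ' x
        + ((ldot / (2 * l) : ℝ) : ℂ) * ψ x) := by
      rw [hKf]; push_cast; ring
    have habs : ‖Kf x‖ ≤ ℏ * (|ldot / l * x + l₀ / l * ddot| * ‖ψ' x‖
        + |ldot / (2 * l)| * ‖ψ x‖) := by
      rw [e, norm_mul, norm_mul, Complex.norm_I, Complex.norm_real, Real.norm_eq_abs, abs_of_pos hℏ, one_mul]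
      have h7 := norm_add_le (((ldot / l * x + l₀ / l * ddot : ℝ) : ℂ) * ψ' x)
        (((ldot / (2 * l) : ℝ) : ℂ) * ψ x)
      rw [norm_mul, norm_mul, Complex.norm_real, Complex.norm_real, Real.norm_eq_abs, Real.norm_eq_abs] at h7
      exact mul_le_mul_of_nonneg_left h7 hℏ.le
    have h8 : |ldot / l * x + l₀ / l * ddot| ≤ |ldot / l| * (l₀ / 2) + |(l₀ / l) * ddot| := by
      calc |ldot / l * x + l₀ / l * ddot| ≤ |ldot / l * x| + |l₀ / l * ddot| := abs_add_le _ _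
        _ ≤ |ldot / l| * (l₀ / 2) + |(l₀ / l) * ddot| := by
            rw [abs_mul]
            gcongr
    have hψ'0 := norm_nonneg (ψ' x)
    have hψ0 := norm_nonneg (ψ x)
    rw [hA, hB, hb]
    nlinarith [mul_le_mul_of_nonneg_right h8 hψ'0]
  -- interval integrability of |K|² and of the comparison function
  have hcK : ContinuousOn Kf (Set.Icc a b) := by
    rw [hKf]
    exact ((continuousOn_const.mul ((Complex.continuous_ofReal.continuousOn.mul
      (continuousOn_const.mul hcψ')).sub (continuousOn_const.mul hcψ))).sub
      (continuousOn_const.mul (continuousOn_const.mul hcψ')))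
  have hIK2 : IntervalIntegrable (fun x => ‖Kf x‖ ^ 2) volume a b := by
    apply ContinuousOn.intervalIntegrable
    rw [Set.uIcc_of_le hab]
    exact (continuous_norm.comp_continuousOn hcK).pow 2
  have hIfg : IntervalIntegrable (fun x => ‖ψ' x‖ * ‖ψ x‖) volume a b := by
    apply ContinuousOn.intervalIntegrable
    rw [Set.uIcc_of_le hab]
    exact (continuous_norm.comp_continuousOn hcψ').mul
      (continuous_norm.comp_continuousOn hcψ)
  have hIAB2 : IntervalIntegrable
      (fun x => (A * ‖ψ' x‖ + B * ‖ψ x‖) ^ 2) volume a b := by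
    have e : (fun x => (A * ‖ψ' x‖ + B * ‖ψ x‖) ^ 2) =
        fun x => A ^ 2 * ‖ψ' x‖ ^ 2
          + (2 * A * B) * (‖ψ' x‖ * ‖ψ x‖)
          + B ^ 2 * ‖ψ x‖ ^ 2 := by funext x; ring
    rw [e]
    exact ((hIQ'.const_mul _).add (hIfg.const_mul _)).add (hIQ.const_mul _)
  -- norm bound for K
  have step1 : (∫ x in a..b, ‖Kf x‖ ^ 2)
      ≤ ∫ x in a..b, (A * ‖ψ' x‖ + B * ‖ψ x‖) ^ 2 := by
    apply intervalIntegral.integral_mono_on hab hIK2 hIAB2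
    intro x hx
    have h9 := hKpt x hx
    exact pow_le_pow_left₀ (norm_nonneg (Kf x)) h9 2
  have step2 : (∫ x in a..b, (A * ‖ψ' x‖ + B * ‖ψ x‖) ^ 2)
      ≤ (A * Real.sqrt Q' + B * Real.sqrt Q) ^ 2 := by
    have e : (fun x => (A * ‖ψ' x‖ + B * ‖ψ x‖) ^ 2) =
        fun x => (A ^ 2 * ‖ψ' x‖ ^ 2
          + (2 * A * B) * (‖ψ' x‖ * ‖ψ x‖))
          + B ^ 2 * ‖ψ x‖ ^ 2 := by funext x; ring
    rw [e, intervalIntegral.integral_add ((hIQ'.const_mul _).add (hIfg.const_mul _))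
      (hIQ.const_mul _), intervalIntegral.integral_add (hIQ'.const_mul _) (hIfg.const_mul _),
      intervalIntegral.integral_const_mul, intervalIntegral.integral_const_mul,
      intervalIntegral.integral_const_mul]
    have hcs2 := cs_interval hab hIQ' hIQ hIfg
    rw [← hQ', ← hQ] at hcs2 ⊢
    have hrhs : (A * Real.sqrt Q' + B * Real.sqrt Q) ^ 2
        = A ^ 2 * Q' + 2 * A * B * (Real.sqrt Q' * Real.sqrt Q) + B ^ 2 * Q := by
      have hs1 : Real.sqrt Q' ^ 2 = Q' := Real.sq_sqrt hQ'0
      have hs2 : Real.sqrt Q ^ 2 = Q := Real.sq_sqrt hQ0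
      linear_combination A ^ 2 * hs1 + B ^ 2 * hs2
    rw [hrhs]
    have hmul' := mul_le_mul_of_nonneg_left hcs2
      (mul_nonneg (mul_nonneg (by norm_num : (0:ℝ) ≤ 2) hA0) hB0)
    linarith only [hmul']
  have hNK : Real.sqrt (∫ x in a..b, ‖Kf x‖ ^ 2)
      ≤ A * Real.sqrt Q' + B * Real.sqrt Q := by
    calc Real.sqrt (∫ x in a..b, ‖Kf x‖ ^ 2)
        ≤ Real.sqrt ((A * Real.sqrt Q' + B * Real.sqrt Q) ^ 2) :=
          Real.sqrt_le_sqrt (step1.trans step2)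
      _ = A * Real.sqrt Q' + B * Real.sqrt Q := Real.sqrt_sq
          (add_nonneg (mul_nonneg hA0 (Real.sqrt_nonneg _)) (mul_nonneg hB0 (Real.sqrt_nonneg _)))
  -- norm of Hψ
  have hHnorm : Real.sqrt (∫ x in a..b,
      ‖-((l₀ / l) ^ 2 * (ℏ ^ 2 / (2 * m)) : ℂ) * ψ'' x‖ ^ 2) = c * Real.sqrt R := by
    have e : (fun x => ‖-((l₀ / l) ^ 2 * (ℏ ^ 2 / (2 * m)) : ℂ) * ψ'' x‖ ^ 2) =
        fun x => c ^ 2 * ‖ψ'' x‖ ^ 2 := by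
      funext x
      have ecast : (-((l₀ / l) ^ 2 * (ℏ ^ 2 / (2 * m))) : ℂ) = ((-c : ℝ) : ℂ) := by
        rw [hc]; push_cast; ring
      rw [norm_mul, ecast, Complex.norm_real, Real.norm_eq_abs, abs_neg, abs_of_pos hc0]
      ring
    rw [e, intervalIntegral.integral_const_mul, Real.sqrt_mul (sq_nonneg c), Real.sqrt_sq hc0.le,
      hRdef]
  rw [hHnorm]
  -- combine
  have hsq' : Real.sqrt Q' ≤ (Real.sqrt Q / t + t * Real.sqrt R) / 2 :=
    (Real.sqrt_le_sqrt key).trans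
      (sqrt_mul_le_half _ _ t (Real.sqrt_nonneg _) (Real.sqrt_nonneg _) ht)
  have hmul := mul_le_mul_of_nonneg_left hsq' (by linarith : (0:ℝ) ≤ A + 1)
  have hsQ'0 := Real.sqrt_nonneg Q'
  have hsQ0 := Real.sqrt_nonneg Q
  have hsR0 := Real.sqrt_nonneg R
  have hexpand : (A + 1) * ((Real.sqrt Q / t + t * Real.sqrt R) / 2)
      = ε * c * Real.sqrt R + ((A + 1) ^ 2 / (4 * (ε * c))) * Real.sqrt Q := by
    rw [htdef]; field_simp; ring
  simp only [hKf] at hNK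
  linarith only [hNK, hmul, hexpand, hsQ'0]
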